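/- As n → ∞ along positive integers, ∫₀¹ (xⁿ + (1-x)ⁿ)^{1/n} · max(x, 1-x) dx = 7/12 + O(1/n²); i.e., E(Z_n Z_∞) = (2/3)·(7/8) + O(n^{-2}), where Z_n = (Uⁿ + (1-U)ⁿ)^{1/n} and Z_∞ = max(U, 1-U) for U uniform on [0,1]. -/

import Mathlib

open Asymptotics Filter


lemma contf (n : ℕ) : Continuous (fun x : ℝ => (x ^ n + (1 - x) ^ n) ^ ((n : ℝ)⁻¹) * max x (1 - x)) := by
  apply Continuous.mul
  · apply Continuous.rpow_const (by continuity)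
    intro x; right; positivity
  · exact continuous_id.max (by continuity)

lemma lower (n : ℕ) (hn : 1 ≤ n) {x : ℝ} (hx : x ∈ Set.Icc (0:ℝ) 1) :
    max x (1-x) ≤ (x ^ n + (1 - x) ^ n) ^ ((n : ℝ)⁻¹) := by
  obtain ⟨h0, h1⟩ := hx
  have hM : (0:ℝ) ≤ max x (1-x) := le_max_iff.2 (Or.inl h0)
  have key : (max x (1-x)) ^ n ≤ x ^ n + (1 - x) ^ n := by
    rcases le_total x (1-x) with h | h
    · rw [max_eq_right h]; nlinarith [pow_nonneg h0 n]
    · rw [max_eq_left h]; nlinarith [pow_nonneg (by linarith : (0:ℝ) ≤ 1 - x) n]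
  calc max x (1-x) = ((max x (1-x)) ^ n) ^ ((n:ℝ)⁻¹) :=
        (Real.pow_rpow_inv_natCast hM (by omega)).symm
    _ ≤ (x ^ n + (1 - x) ^ n) ^ ((n:ℝ)⁻¹) :=
        Real.rpow_le_rpow (pow_nonneg hM n) key (by positivity)

lemma upper (n : ℕ) (hn : 1 ≤ n) {x : ℝ} (hx : x ∈ Set.Icc (0:ℝ) 1) :
    (x ^ n + (1 - x) ^ n) ^ ((n : ℝ)⁻¹) ≤ max x (1-x) + (2 * min x (1-x))^n / n := by
  obtain ⟨h0, h1⟩ := hx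
  set M := max x (1-x) with hMdef
  set m := min x (1-x) with hmdef
  have hM0 : (0:ℝ) ≤ M := le_max_iff.2 (Or.inl h0)
  have hm0 : (0:ℝ) ≤ m := le_min h0 (by linarith)
  have hMhalf : (1:ℝ)/2 ≤ M := by
    rcases le_total x (1-x) with h | h
    · rw [hMdef, max_eq_right h]; linarith
    · rw [hMdef, max_eq_left h]; linarith
  have hsum : x ^ n + (1 - x) ^ n = M ^ n + m ^ n := by
    rcases le_total x (1-x) with h | h
    · rw [hMdef, hmdef, max_eq_right h, min_eq_left h, add_comm]
    · rw [hMdef, hmdef, max_eq_left h, min_eq_right h]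
  set b := (2 * m)^n / n with hbdef
  have hb0 : 0 ≤ b := by positivity
  have hMpos : (0:ℝ) < M := by linarith
  have key : M ^ n + m ^ n ≤ (M + b) ^ n := by
    have hbern := one_add_mul_le_pow (a := b / M) (by linarith [div_nonneg hb0 hM0]) n
    have h1' : M ^ n * (1 + n * (b / M)) ≤ M ^ n * (1 + b / M) ^ n :=
      mul_le_mul_of_nonneg_left hbern (pow_nonneg hM0 n)
    have h2' : M ^ n * (1 + b / M) ^ n = (M + b) ^ n := by
      rw [← mul_pow]; congr 1; field_simp
    have h3' : M ^ n * (1 + n * (b / M)) = M ^ n + (n : ℝ) * (M ^ n / M) * b := by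
      field_simp
    obtain ⟨k, rfl⟩ : ∃ k, n = k + 1 := ⟨n - 1, by omega⟩
    have hpow : M ^ (k+1) / M = M ^ k := by
      rw [pow_succ, mul_div_assoc, div_self (ne_of_gt hMpos), mul_one]
    have h4' : m ^ (k+1) ≤ (↑(k+1) : ℝ) * (M ^ (k+1) / M) * b := by
      rw [hpow, hbdef]
      have : (↑(k+1) : ℝ) * M ^ k * ((2*m)^(k+1) / ↑(k+1)) = M ^ k * (2*m)^(k+1) := by
        field_simp
      rw [this]
      have h2m : (2:ℝ)^(k+1) * m^(k+1) = (2*m)^(k+1) := by rw [mul_pow]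
      have hMk : ((1:ℝ)/2)^k ≤ M ^ k := pow_le_pow_left₀ (by norm_num) hMhalf k
      calc m ^ (k+1) ≤ 2 * m^(k+1) := by nlinarith [pow_nonneg hm0 (k+1)]
        _ = ((1:ℝ)/2)^k * (2^(k+1) * m^(k+1)) := by
            rw [one_div, inv_pow]; field_simp [pow_succ]; ring
        _ ≤ M ^ k * (2*m)^(k+1) := by
            rw [h2m]; exact mul_le_mul_of_nonneg_right hMk (by positivity)
    linarith [h1'.trans_eq h2', h3']
  calc (x ^ n + (1 - x) ^ n) ^ ((n:ℝ)⁻¹)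
      ≤ ((M + b) ^ n) ^ ((n:ℝ)⁻¹) := by
        rw [hsum]
        exact Real.rpow_le_rpow (by positivity) key (by positivity)
    _ = M + b := Real.pow_rpow_inv_natCast (by positivity) (by omega)


lemma I1 : (∫ x in (0:ℝ)..1, (max x (1-x))^2) = 7/12 := by
  have hc : Continuous (fun x : ℝ => (max x (1-x))^2) := by
    exact ((continuous_id.max (by continuity)).pow 2)
  have hsplit : (∫ x in (0:ℝ)..(1/2), (max x (1-x))^2) + (∫ x in (1/2:ℝ)..1, (max x (1-x))^2)
      = ∫ x in (0:ℝ)..1, (max x (1-x))^2 :=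
    intervalIntegral.integral_add_adjacent_intervals
      (hc.intervalIntegrable _ _) (hc.intervalIntegrable _ _)
  have e1 : (∫ x in (0:ℝ)..(1/2), (max x (1-x))^2) = ∫ x in (0:ℝ)..(1/2), (1-x)^2 := by
    apply intervalIntegral.integral_congr
    intro x hx
    rw [Set.uIcc_of_le (by norm_num)] at hx
    simp only []
    rw [max_eq_right (by obtain ⟨a, b⟩ := hx; linarith)]
  have e2 : (∫ x in (1/2:ℝ)..1, (max x (1-x))^2) = ∫ x in (1/2:ℝ)..1, x^2 := by
    apply intervalIntegral.integral_congr
    intro x hx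
    rw [Set.uIcc_of_le (by norm_num)] at hx
    simp only []
    rw [max_eq_left (by obtain ⟨a, b⟩ := hx; linarith)]
  have e3 : (∫ x in (0:ℝ)..(1/2), (1-x)^2) = ∫ x in (1/2:ℝ)..1, x^2 := by
    have := intervalIntegral.integral_comp_sub_left (a := (0:ℝ)) (b := 1/2) (fun y : ℝ => y^2) 1
    norm_num at this ⊢
    convert this using 2 <;> norm_num
  rw [← hsplit, e1, e2, e3, integral_pow]
  norm_num

lemma I2 (n : ℕ) : (∫ x in (0:ℝ)..1, (2 * min x (1-x))^n) = 1/(n+1) := by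
  have hc : Continuous (fun x : ℝ => (2 * min x (1-x))^n) := by
    exact ((continuous_const.mul (continuous_id.min (by continuity))).pow n)
  have hsplit := intervalIntegral.integral_add_adjacent_intervals
    (a := (0:ℝ)) (b := 1/2) (c := 1) (f := fun x => (2 * min x (1-x))^n) (μ := MeasureTheory.volume)
    (hc.intervalIntegrable _ _) (hc.intervalIntegrable _ _)
  have e1 : (∫ x in (0:ℝ)..(1/2), (2 * min x (1-x))^n) = ∫ x in (0:ℝ)..(1/2), (2*x)^n := by
    apply intervalIntegral.integral_congr
    intro x hx
    rw [Set.uIcc_of_le (by norm_num)] at hx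
    simp only []
    rw [min_eq_left (by obtain ⟨a, b⟩ := hx; linarith)]
  have e2 : (∫ x in (1/2:ℝ)..1, (2 * min x (1-x))^n) = ∫ x in (1/2:ℝ)..1, (2*(1-x))^n := by
    apply intervalIntegral.integral_congr
    intro x hx
    rw [Set.uIcc_of_le (by norm_num)] at hx
    simp only []
    rw [min_eq_right (by obtain ⟨a, b⟩ := hx; linarith)]
  have e3 : (∫ x in (1/2:ℝ)..1, (2*(1-x))^n) = ∫ x in (0:ℝ)..(1/2), (2*x)^n := by
    have := intervalIntegral.integral_comp_sub_left (a := (1/2:ℝ)) (b := 1) (fun y : ℝ => (2*y)^n) 1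
    norm_num at this ⊢
    convert this using 2 <;> norm_num
  have e4 : (∫ x in (0:ℝ)..(1/2), (2*x)^n) = 1/(2*(n+1)) := by
    have : ∀ x : ℝ, (2*x)^n = 2^n * x^n := fun x => mul_pow 2 x n
    simp_rw [this]
    rw [intervalIntegral.integral_const_mul, integral_pow]
    have h2 : ((1:ℝ)/2)^(n+1) = (1/2)^n * (1/2) := pow_succ _ _
    rw [zero_pow (by omega)]
    push_cast
    rw [sub_zero, h2]
    have : (2:ℝ)^n * ((1/2)^n * (1/2) / (n+1)) = (2^n * (1/2)^n) * ((1/2) / (n+1)) := by ring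
    rw [this]
    have : (2:ℝ)^n * (1/2)^n = 1 := by
      rw [← mul_pow]; norm_num
    rw [this, one_mul]
    field_simp
  rw [← hsplit, e1, e2, e3, e4]
  have hn : ((n:ℝ)+1) ≠ 0 := by positivity
  field_simp
  norm_num


theorem stmt15 :
    (fun n : ℕ =>
        (∫ x in (0:ℝ)..1, (x ^ n + (1 - x) ^ n) ^ ((n : ℝ)⁻¹) * max x (1 - x)) -
          2 / 3 * (7 / 8))
      =O[atTop] (fun n : ℕ => ((n : ℝ) ^ 2)⁻¹) := by
  rw [isBigO_iff]
  refine ⟨1, ?_⟩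
  filter_upwards [eventually_ge_atTop 1] with n hn
  have hn0 : (0:ℝ) < n := by exact_mod_cast hn
  set F : ℝ → ℝ := fun x => (x ^ n + (1 - x) ^ n) ^ ((n : ℝ)⁻¹) * max x (1 - x) with hF
  have hcM2 : Continuous (fun x : ℝ => (max x (1-x))^2) :=
    (continuous_id.max (by continuity)).pow 2
  have hcg : Continuous (fun x : ℝ => (max x (1-x))^2 + (2 * min x (1-x))^n / n) := by
    apply hcM2.add
    exact ((continuous_const.mul (continuous_id.min (by continuity))).pow n).div_const _
  have hiF : IntervalIntegrable F MeasureTheory.volume 0 1 := (contf n).intervalIntegrable _ _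
  have hiM2 : IntervalIntegrable (fun x : ℝ => (max x (1-x))^2) MeasureTheory.volume 0 1 :=
    hcM2.intervalIntegrable _ _
  have hig : IntervalIntegrable (fun x : ℝ => (max x (1-x))^2 + (2 * min x (1-x))^n / n)
      MeasureTheory.volume 0 1 := hcg.intervalIntegrable _ _
  have hlow : (7:ℝ)/12 ≤ ∫ x in (0:ℝ)..1, F x := by
    rw [← I1]
    apply intervalIntegral.integral_mono_on (by norm_num) hiM2 hiF
    intro x hx
    have hM0 : (0:ℝ) ≤ max x (1-x) := le_max_iff.2 (Or.inl hx.1)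
    have := lower n hn hx
    calc (max x (1-x))^2 = max x (1-x) * max x (1-x) := sq (max x (1-x)) ▸ (sq (max x (1-x)))
      _ ≤ (x ^ n + (1 - x) ^ n) ^ ((n : ℝ)⁻¹) * max x (1-x) :=
          mul_le_mul_of_nonneg_right this hM0
  have hhigh : (∫ x in (0:ℝ)..1, F x) ≤ 7/12 + 1/((n:ℝ)*(n+1)) := by
    have step : (∫ x in (0:ℝ)..1, F x)
        ≤ ∫ x in (0:ℝ)..1, ((max x (1-x))^2 + (2 * min x (1-x))^n / n) := by
      apply intervalIntegral.integral_mono_on (by norm_num) hiF hig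
      intro x hx
      have hM0 : (0:ℝ) ≤ max x (1-x) := le_max_iff.2 (Or.inl hx.1)
      have hM1 : max x (1-x) ≤ 1 := max_le hx.2 (by linarith [hx.1])
      have hu := upper n hn hx
      have h2m : (0:ℝ) ≤ (2 * min x (1-x))^n / n := by
        have hm0 : (0:ℝ) ≤ min x (1-x) := le_min hx.1 (by linarith [hx.2])
        positivity
      calc F x ≤ (max x (1-x) + (2 * min x (1-x))^n / n) * max x (1-x) :=
            mul_le_mul_of_nonneg_right hu hM0
        _ = (max x (1-x))^2 + ((2 * min x (1-x))^n / n) * max x (1-x) := by ring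
        _ ≤ (max x (1-x))^2 + (2 * min x (1-x))^n / n := by nlinarith
    have heval : (∫ x in (0:ℝ)..1, ((max x (1-x))^2 + (2 * min x (1-x))^n / n))
        = 7/12 + 1/((n:ℝ)*(n+1)) := by
      have hig2 : IntervalIntegrable (fun x : ℝ => (2 * min x (1-x))^n / (n:ℝ))
          MeasureTheory.volume 0 1 :=
        (((continuous_const.mul (continuous_id.min (by continuity))).pow n).div_const
          _).intervalIntegrable _ _
      rw [intervalIntegral.integral_add hiM2 hig2, I1, intervalIntegral.integral_div, I2]
      rw [div_div]
      ring_nf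
    linarith [step.trans_eq heval]
  have habs : |(∫ x in (0:ℝ)..1, F x) - 2 / 3 * (7 / 8)| ≤ 1/((n:ℝ)*(n+1)) := by
    rw [abs_le]
    constructor <;> [linarith; linarith]
  calc ‖(∫ x in (0:ℝ)..1, F x) - 2 / 3 * (7 / 8)‖ ≤ 1/((n:ℝ)*(n+1)) := habs
    _ ≤ ((n:ℝ)^2)⁻¹ := by
        rw [one_div]
        apply inv_anti₀ (by positivity)
        nlinarith
    _ = 1 * ‖(((n:ℝ))^2)⁻¹‖ := by
        rw [one_mul, Real.norm_eq_abs, abs_of_nonneg (by positivity)]
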